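/- arXiv:1111.1738 — 4 statements merged into one kernel-verified Lean document; each statement's English description precedes it below -/
import Mathlib

section
/- Let κ > ω > 0, let ε ∈ (0,1), and let a, b, v ≥ 0 be real numbers. If a ≤ v·( a^{ω/κ} + b^{ω/κ} ) + b, then a ≤ ((1+ε)/(1−ε)) · ( 2·v^{κ/(κ−ω)}·ε^{−ω/(κ−ω)} + b ). -/
/-- Young-type bound: `v * x^s ≤ ε*x + v^(1/(1-s)) * ε^(-(s/(1-s)))`. -/
lemma young_aux (s ε v x : ℝ) (hs0 : 0 < s) (hs1 : s < 1) (hε : 0 < ε)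
    (hv : 0 ≤ v) (hx : 0 ≤ x) :
    v * x ^ s ≤ ε * x + v ^ (1 / (1 - s)) * ε ^ (-(s / (1 - s))) := by
  have h1s : 0 < 1 - s := by linarith
  set p : ℝ := 1 / s with hp
  set q : ℝ := 1 / (1 - s) with hq
  have hpq : p.HolderConjugate q := by
    rw [Real.holderConjugate_iff]; constructor
    · rw [hp]; rw [one_lt_div hs0]; linarith
    · rw [hp, hq]; field_simp; ring
  have hεx : (0:ℝ) ≤ ε * x := mul_nonneg hε.le hx
  have hy : (0:ℝ) ≤ v * ε ^ (-s) := mul_nonneg hv (Real.rpow_nonneg hε.le _)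
  have key := Real.young_inequality_of_nonneg (a := (ε * x) ^ s) (b := v * ε ^ (-s))
    (Real.rpow_nonneg hεx s) hy hpq
  have e1 : ((ε * x) ^ s) ^ p = ε * x := by
    rw [← Real.rpow_mul hεx, hp, mul_one_div, div_self hs0.ne', Real.rpow_one]
  have e2 : (v * ε ^ (-s)) ^ q = v ^ q * ε ^ (-(s / (1 - s))) := by
    rw [Real.mul_rpow hv (Real.rpow_nonneg hε.le _), ← Real.rpow_mul hε.le]
    congr 1
    rw [hq]; field_simp
  have e3 : (ε * x) ^ s * (v * ε ^ (-s)) = v * x ^ s := by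
    rw [Real.mul_rpow hε.le hx]
    have h1 : ε ^ s * ε ^ (-s) = 1 := by
      rw [← Real.rpow_add hε]; norm_num
    linear_combination v * x ^ s * h1
  rw [e1, e2, e3] at key
  have hq1 : 1 < q := by rw [hq]; rw [one_lt_div h1s]; linarith
  have hp1 : 1 < p := (Real.holderConjugate_iff.mp hpq).1
  calc v * x ^ s ≤ (ε * x) / p + (v ^ q * ε ^ (-(s / (1 - s)))) / q := key
    _ ≤ ε * x + v ^ q * ε ^ (-(s / (1 - s))) := by
        gcongr
        · exact div_le_self hεx hp1.le
        · exact div_le_self (mul_nonneg (Real.rpow_nonneg hv _) (Real.rpow_nonneg hε.le _)) hq1.le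

/-- Deterministic peeling inequality: if `a ≤ v·(a^(ω/κ) + b^(ω/κ)) + b` with
`κ > ω > 0`, `ε ∈ (0,1)` and `a, b, v ≥ 0`, then
`a ≤ ((1+ε)/(1-ε)) · (2·v^(κ/(κ-ω))·ε^(-ω/(κ-ω)) + b)`. -/
theorem peeling_inequality (κ ω ε a b v : ℝ)
    (hω : 0 < ω) (hκ : ω < κ) (hε0 : 0 < ε) (hε1 : ε < 1)
    (ha : 0 ≤ a) (hb : 0 ≤ b) (hv : 0 ≤ v)
    (h : a ≤ v * (a ^ (ω / κ) + b ^ (ω / κ)) + b) :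
    a ≤ ((1 + ε) / (1 - ε)) *
      (2 * v ^ (κ / (κ - ω)) * ε ^ (-(ω / (κ - ω))) + b) := by
  have hκ0 : 0 < κ := hω.trans hκ
  have hκω : 0 < κ - ω := by linarith
  set s : ℝ := ω / κ with hs
  have hs0 : 0 < s := div_pos hω hκ0
  have hs1 : s < 1 := (div_lt_one hκ0).mpr hκ
  have eq1 : 1 / (1 - s) = κ / (κ - ω) := by
    rw [hs]; field_simp
  have eq2 : s / (1 - s) = ω / (κ - ω) := by
    rw [hs]; field_simp
  set K : ℝ := v ^ (κ / (κ - ω)) * ε ^ (-(ω / (κ - ω))) with hK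
  have hK0 : 0 ≤ K := mul_nonneg (Real.rpow_nonneg hv _) (Real.rpow_nonneg hε0.le _)
  have ya := young_aux s ε v a hs0 hs1 hε0 hv ha
  have yb := young_aux s ε v b hs0 hs1 hε0 hv hb
  rw [eq1, eq2, ← hK] at ya yb
  have step : (1 - ε) * a ≤ 2 * K + (1 + ε) * b := by nlinarith
  have h1ε : 0 < 1 - ε := by linarith
  rw [div_mul_eq_mul_div, le_div_iff₀ h1ε]
  nlinarith
end

section
/- Let (Ω, μ) be a probability space, let κ > ω > 0, set s = κ/(κ−ω), let ε ∈ (0,1), let b, v ≥ 0 and c ≥ 0 be real constants, and let A, Z : Ω → ℝ be nonnegative integrable random variables such that Z^s is integrable with E[Z^s] ≤ c^s. If almost surely A ≤ Z·v·( A^{ω/κ} + b^{ω/κ} ) + b, then E[A] ≤ ((1+ε)/(1−ε)) · ( 2·c^s·v^s·ε^{−ω/(κ−ω)} + b ). -/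
open MeasureTheory

/-- Expectation version of the peeling argument: on a probability space, if the
nonnegative integrable random variables `A`, `Z` satisfy `E[Z^s] ≤ c^s` with
`s = κ/(κ-ω)` and almost surely `A ≤ Z·v·(A^(ω/κ) + b^(ω/κ)) + b`, then
`E[A] ≤ ((1+ε)/(1-ε)) · (2·c^s·v^s·ε^(-ω/(κ-ω)) + b)`. -/
theorem expected_peeling_inequality
    {Ω : Type*} [MeasurableSpace Ω] (μ : Measure Ω) [IsProbabilityMeasure μ]
    (κ ω ε b v c : ℝ) (hω : 0 < ω) (hκ : ω < κ) (hε0 : 0 < ε) (hε1 : ε < 1)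
    (hb : 0 ≤ b) (hv : 0 ≤ v) (hc : 0 ≤ c)
    (A Z : Ω → ℝ) (hA0 : ∀ x, 0 ≤ A x) (hZ0 : ∀ x, 0 ≤ Z x)
    (hAint : Integrable A μ) (hZint : Integrable Z μ)
    (hZs : Integrable (fun x => Z x ^ (κ / (κ - ω))) μ)
    (hZm : ∫ x, Z x ^ (κ / (κ - ω)) ∂μ ≤ c ^ (κ / (κ - ω)))
    (hae : ∀ᵐ x ∂μ, A x ≤ Z x * v * (A x ^ (ω / κ) + b ^ (ω / κ)) + b) :
    ∫ x, A x ∂μ ≤ ((1 + ε) / (1 - ε)) *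
      (2 * c ^ (κ / (κ - ω)) * v ^ (κ / (κ - ω)) * ε ^ (-(ω / (κ - ω))) + b) := by
  have hκω : 0 < κ - ω := by linarith
  have hκ0 : 0 < κ := hω.trans hκ
  set s : ℝ := κ / (κ - ω) with hsdef
  set t : ℝ := ω / (κ - ω) with htdef
  have hconj : (κ / ω).HolderConjugate s := by
    rw [Real.holderConjugate_iff]; constructor
    · exact (one_lt_div hω).2 hκ
    · rw [hsdef]; field_simp; ring
  have hεt : (0:ℝ) < ε ^ (-t) := Real.rpow_pos_of_pos hε0 _
  -- key Young-type bound
  have key : ∀ x y : ℝ, 0 ≤ x → 0 ≤ y →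
      x * y ^ (ω / κ) ≤ ε * y + ε ^ (-t) * x ^ s := by
    intro x y hx hy
    have hee : ε ^ (-(ω/κ)) * ε ^ (ω/κ) = 1 := by
      rw [← Real.rpow_add hε0]; simp
    have h1 : x * y ^ (ω / κ) =
        (x * ε ^ (-(ω/κ))) * (ε ^ (ω/κ) * y ^ (ω / κ)) := by
      calc x * y ^ (ω / κ) = x * (ε ^ (-(ω/κ)) * ε ^ (ω/κ)) * y ^ (ω / κ) := by
            rw [hee]; ring
        _ = (x * ε ^ (-(ω/κ))) * (ε ^ (ω/κ) * y ^ (ω / κ)) := by ring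
    have hyoung := Real.young_inequality_of_nonneg
      (a := ε ^ (ω/κ) * y ^ (ω / κ)) (b := x * ε ^ (-(ω/κ)))
      (mul_nonneg (Real.rpow_nonneg hε0.le _) (Real.rpow_nonneg hy _))
      (mul_nonneg hx (Real.rpow_nonneg hε0.le _)) hconj
    have hp1 : (1:ℝ) < κ / ω := hconj.lt
    have hq1 : (1:ℝ) < s := hconj.symm.lt
    have ha : (ε ^ (ω/κ) * y ^ (ω / κ)) ^ (κ/ω) = ε * y := by
      rw [Real.mul_rpow (Real.rpow_nonneg hε0.le _) (Real.rpow_nonneg hy _),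
        ← Real.rpow_mul hε0.le, ← Real.rpow_mul hy]
      have he : ω / κ * (κ / ω) = 1 := by field_simp
      rw [he, Real.rpow_one, Real.rpow_one]
    have hb' : (x * ε ^ (-(ω/κ))) ^ s = x ^ s * ε ^ (-t) := by
      rw [Real.mul_rpow hx (Real.rpow_nonneg hε0.le _),
        ← Real.rpow_mul hε0.le]
      have he2 : -(ω/κ) * s = -t := by
        rw [htdef, hsdef]; field_simp
      rw [he2]
    calc x * y ^ (ω / κ) = (ε ^ (ω/κ) * y ^ (ω / κ)) * (x * ε ^ (-(ω/κ))) := by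
          rw [h1]; ring
      _ ≤ (ε ^ (ω/κ) * y ^ (ω / κ)) ^ (κ/ω) / (κ/ω) + (x * ε ^ (-(ω/κ))) ^ s / s :=
          hyoung
      _ = (ε * y) / (κ/ω) + (x ^ s * ε ^ (-t)) / s := by rw [ha, hb']
      _ ≤ ε * y + ε ^ (-t) * x ^ s := by
          have h2 : (ε * y) / (κ/ω) ≤ ε * y := by
            apply div_le_self (by positivity) hp1.le
          have h3 : (x ^ s * ε ^ (-t)) / s ≤ x ^ s * ε ^ (-t) := by
            apply div_le_self (by positivity) hq1.le
          linarith [h3]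
  -- pointwise a.e. bound
  have hptw : ∀ᵐ x ∂μ, A x ≤
      ε * A x + (2 * ε ^ (-t) * v ^ s) * Z x ^ s + (ε * b + b) := by
    filter_upwards [hae] with x hx
    have hZv : 0 ≤ Z x * v := mul_nonneg (hZ0 x) hv
    have k1 := key (Z x * v) (A x) hZv (hA0 x)
    have k2 := key (Z x * v) b hZv hb
    have hZvs : (Z x * v) ^ s = Z x ^ s * v ^ s :=
      Real.mul_rpow (hZ0 x) hv
    nlinarith [hεt, Real.rpow_nonneg (hZ0 x) s, Real.rpow_nonneg hv s]
  -- integrate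
  have hgint : Integrable (fun x =>
      ε * A x + (2 * ε ^ (-t) * v ^ s) * Z x ^ s + (ε * b + b)) μ :=
    ((hAint.const_mul ε).add (hZs.const_mul _)).add (integrable_const _)
  have hmono : ∫ x, A x ∂μ ≤
      ∫ x, (ε * A x + (2 * ε ^ (-t) * v ^ s) * Z x ^ s + (ε * b + b)) ∂μ :=
    integral_mono_ae hAint hgint hptw
  have hIeq : ∫ x, (ε * A x + (2 * ε ^ (-t) * v ^ s) * Z x ^ s + (ε * b + b)) ∂μ
      = ε * ∫ x, A x ∂μ + (2 * ε ^ (-t) * v ^ s) * ∫ x, Z x ^ s ∂μ + (ε * b + b) := by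
    have hf1 : Integrable (fun x => ε * A x) μ := hAint.const_mul ε
    have hf2 : Integrable (fun x => (2 * ε ^ (-t) * v ^ s) * Z x ^ s) μ :=
      hZs.const_mul _
    have hf12 : Integrable (fun x => ε * A x + (2 * ε ^ (-t) * v ^ s) * Z x ^ s) μ :=
      hf1.add hf2
    rw [integral_add hf12 (integrable_const _), integral_add hf1 hf2,
      integral_const_mul, integral_const_mul, integral_const]
    simp
  set I := ∫ x, A x ∂μ
  set J := ∫ x, Z x ^ s ∂μ
  have hJ0 : 0 ≤ J := integral_nonneg fun x => Real.rpow_nonneg (hZ0 x) s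
  have hineq : I ≤ ε * I + (2 * ε ^ (-t) * v ^ s) * J + (ε * b + b) := by
    rw [← hIeq]; exact hmono
  have hcs : (0:ℝ) ≤ c ^ s := Real.rpow_nonneg hc s
  have hvs : (0:ℝ) ≤ v ^ s := Real.rpow_nonneg hv s
  have hK : (2 * ε ^ (-t) * v ^ s) * J ≤ 2 * c ^ s * v ^ s * ε ^ (-t) := by
    have := mul_le_mul_of_nonneg_left hZm (by positivity : (0:ℝ) ≤ 2 * ε ^ (-t) * v ^ s)
    calc (2 * ε ^ (-t) * v ^ s) * J ≤ (2 * ε ^ (-t) * v ^ s) * c ^ s := this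
      _ = 2 * c ^ s * v ^ s * ε ^ (-t) := by ring
  rw [div_mul_eq_mul_div, le_div_iff₀ (by linarith : (0:ℝ) < 1 - ε)]
  have hK0 : (0:ℝ) ≤ 2 * c ^ s * v ^ s * ε ^ (-t) := by positivity
  nlinarith [hK0, hK, hineq]
end

section
/- Let P and Q be probability measures on [0,1]^d with densities p and q with respect to Lebesgue measure, and assume q(x) ≥ c > 0 for almost every x. Let {R_0,…,R_{L−1}} be a finite measurable partition of [0,1]^d with Q(R_i) > 0 and P(R_i) > 0 for all i. Let ψ = Σ_i ψ_i·1_{R_i} with ψ_i = P(R_i)/Q(R_i), and let φ = Σ_i c_i·1_{R_i} with c_i > 0; assume ψ_i ≤ M and c_i ≤ M for all i, where M < ∞. Then D(ψ) − D(φ) ≥ (c/(2M)) · ‖ψ − φ‖_{L²}², where ‖·‖_{L²} is the L² norm with respect to Lebesgue measure on [0,1]^d; in particular, the margin condition holds with exponent κ = 2 when the theoretically optimal rule lies in the candidate class. -/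
open MeasureTheory


lemma sublemmaA {t : ℝ} (ht : 0 < t) (ht1 : t ≤ 1) :
    (1 - t)^2 / 2 ≤ t - 1 - Real.log t := by
  set F : ℝ → ℝ := fun s => s - 1 - Real.log s - (1 - s)^2/2 with hF
  have hder : ∀ s : ℝ, 0 < s → HasDerivAt F (1 - 1/s - (2 * (1 - s)^1 * (0 - 1))/2) s := by
    intro s hs
    have h1 : HasDerivAt (fun u : ℝ => u - 1 - Real.log u) (1 - 1/s) s := by
      exact (((hasDerivAt_id s).sub_const 1).sub (Real.hasDerivAt_log hs.ne')).congr_deriv (by simp)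
    have h2 : HasDerivAt (fun u : ℝ => (1 - u)^2/2) ((2 * (1 - s)^1 * (0 - 1))/2) s := by
      exact (((hasDerivAt_const s (1:ℝ)).sub (hasDerivAt_id s)).pow 2).div_const 2
    exact h1.sub h2
  have hanti : AntitoneOn F (Set.Ioi (0:ℝ)) := by
    apply antitoneOn_of_deriv_nonpos (convex_Ioi 0)
    · intro s hs
      exact (hder s hs).continuousAt.continuousWithinAt
    · intro s hs
      rw [interior_Ioi] at hs
      exact (hder s hs).differentiableAt.differentiableWithinAt
    · intro s hs
      rw [interior_Ioi] at hs
      rw [(hder s hs).deriv]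
      have hs' : (0:ℝ) < s := hs
      have key : s * (1 - 1/s - (2 * (1 - s)^1 * (0 - 1))/2) = -(s - 1)^2 := by
        field_simp; ring
      nlinarith [sq_nonneg (s - 1)]
  have h01 : (1:ℝ) ∈ Set.Ioi (0:ℝ) := by norm_num
  have := hanti (Set.mem_Ioi.2 ht) h01 ht1
  simp only [hF] at this
  simp only [Real.log_one] at this
  nlinarith [this]

lemma sublemmaB {t : ℝ} (ht : 1 ≤ t) :
    (t - 1)^2 / (2*t) ≤ t - 1 - Real.log t := by
  have ht0 : (0:ℝ) < t := lt_of_lt_of_le one_pos ht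
  have hlog0 : 0 ≤ Real.log t := Real.log_nonneg ht
  have hs : Real.log t ≤ Real.sinh (Real.log t) := Real.self_le_sinh_iff.2 hlog0
  rw [Real.sinh_eq, Real.exp_log ht0, Real.exp_neg, Real.exp_log ht0] at hs
  have h2 : (t - 1)^2/(2*t) = t - 1 - (t - t⁻¹)/2 := by field_simp; ring
  rw [h2]; linarith

lemma scalar_ineq {x y M : ℝ} (hx : 0 < x) (hy : 0 < y) (hxM : x ≤ M) (hyM : y ≤ M) :
    (x - y)^2 / (2*M) ≤ x * Real.log (x / y) - x + y := by
  have hM : (0:ℝ) < M := lt_of_lt_of_le hx hxM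
  rcases le_total y x with hyx | hxy
  · -- y ≤ x, t = y/x ∈ (0,1]
    have ht : 0 < y / x := div_pos hy hx
    have ht1 : y / x ≤ 1 := (div_le_one hx).2 hyx
    have hA := sublemmaA ht ht1
    rw [Real.log_div hy.ne' hx.ne'] at hA
    have h2 := mul_le_mul_of_nonneg_left hA hx.le
    have e1 : x * ((1 - y/x)^2/2) = (x - y)^2/(2*x) := by field_simp
    have e2 : x * (y/x - 1 - (Real.log y - Real.log x)) = x * Real.log (x/y) - x + y := by
      rw [Real.log_div hx.ne' hy.ne']; field_simp; ring
    rw [e1, e2] at h2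
    have h3 : (x - y)^2/(2*M) ≤ (x - y)^2/(2*x) := by gcongr <;> positivity
    linarith
  · -- x ≤ y, t = y/x ≥ 1
    have ht : 1 ≤ y / x := (one_le_div hx).2 hxy
    have hB := sublemmaB ht
    rw [Real.log_div hy.ne' hx.ne'] at hB
    have h2 := mul_le_mul_of_nonneg_left hB hx.le
    have e1 : x * ((y/x - 1)^2/(2*(y/x))) = (x - y)^2/(2*y) := by
      field_simp; ring
    have e2 : x * (y/x - 1 - (Real.log y - Real.log x)) = x * Real.log (x/y) - x + y := by
      rw [Real.log_div hx.ne' hy.ne']; field_simp; ring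
    rw [e1, e2] at h2
    have h3 : (x - y)^2/(2*M) ≤ (x - y)^2/(2*y) := by gcongr <;> positivity
    linarith

lemma integral_comp_sum_indicator {α : Type*} [MeasurableSpace α] {L : ℕ}
    (μ : Measure α) (R : Fin L → Set α) (hRmeas : ∀ i, MeasurableSet (R i))
    (hRdisj : Pairwise (Function.onFun Disjoint R))
    (hfin : ∀ i, μ (R i) ≠ ⊤) (hcompl : μ (⋃ i, R i)ᶜ = 0)
    (g : Fin L → ℝ) (F : ℝ → ℝ) :
    ∫ x, F (∑ i, Set.indicator (R i) (fun _ => g i) x) ∂μ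
      = ∑ i, F (g i) * (μ (R i)).toReal := by
  have hae : ∀ᵐ x ∂μ, x ∈ ⋃ i, R i := by
    rw [ae_iff]
    convert hcompl using 2
    rfl
  have key : (fun x => F (∑ i, Set.indicator (R i) (fun _ => g i) x))
      =ᵐ[μ] (fun x => ∑ i, Set.indicator (R i) (fun _ => F (g i)) x) := by
    filter_upwards [hae] with x hx
    obtain ⟨j, hj⟩ := Set.mem_iUnion.1 hx
    have hz : ∀ (h : Fin L → ℝ) i, i ≠ j → Set.indicator (R i) (fun _ => h i) x = 0 := by
      intro h i hij
      exact Set.indicator_of_notMem (fun hxi => (Set.disjoint_left.1 (hRdisj hij) hxi) hj) _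
    have h1 : (∑ i, Set.indicator (R i) (fun _ => g i) x) = g j := by
      rw [Finset.sum_eq_single j (fun i _ hij => hz g i hij) (by simp)]
      exact Set.indicator_of_mem hj _
    have h2 : (∑ i, Set.indicator (R i) (fun _ => F (g i)) x) = F (g j) := by
      rw [Finset.sum_eq_single j (fun i _ hij => hz (fun i => F (g i)) i hij) (by simp)]
      exact Set.indicator_of_mem hj _
    rw [h1, h2]
  rw [integral_congr_ae key, integral_finset_sum]
  · refine Finset.sum_congr rfl fun i _ => ?_
    rw [integral_indicator_const _ (hRmeas i)]
    simp [mul_comm]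
    exact Or.inl rfl
  · intro i _
    rw [integrable_indicator_iff (hRmeas i)]
    exact integrableOn_const (hfin i)

/-- Margin condition with exponent `κ = 2` when the optimal rule lies in the
candidate class: for `P`, `Q` with densities `p`, `q` on `[0,1]^d`, `q ≥ c > 0`
a.e., a finite measurable partition `{R_i}` of `[0,1]^d`, the likelihood-ratio rule
`ψ = Σ_i (P(R_i)/Q(R_i))·1_{R_i}` and any rule `φ = Σ_i c_i·1_{R_i}` with
`0 < c_i ≤ M` and `P(R_i)/Q(R_i) ≤ M`, one has
`D(ψ) - D(φ) ≥ (c/(2M))·‖ψ - φ‖²_{L²}`, where `D(φ) = 1 + ∫ log φ dP - ∫ φ dQ`. -/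
theorem margin_condition_kappa_two
    (d L : ℕ) (hd : 1 ≤ d) (hL : 1 ≤ L)
    (c M : ℝ) (hc : 0 < c) (hM : 0 < M)
    (p q : (Fin d → ℝ) → ℝ)
    (P Q : Measure (Fin d → ℝ)) [IsProbabilityMeasure P] [IsProbabilityMeasure Q]
    (hP : P = (volume.restrict (Set.Icc (0 : Fin d → ℝ) 1)).withDensity
        fun x => ENNReal.ofReal (p x))
    (hQ : Q = (volume.restrict (Set.Icc (0 : Fin d → ℝ) 1)).withDensity
        fun x => ENNReal.ofReal (q x))
    (hq : ∀ᵐ x ∂(volume.restrict (Set.Icc (0 : Fin d → ℝ) 1)), c ≤ q x)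
    (R : Fin L → Set (Fin d → ℝ)) (hRmeas : ∀ i, MeasurableSet (R i))
    (hRdisj : Pairwise (Function.onFun Disjoint R))
    (hRcover : (⋃ i, R i) = Set.Icc (0 : Fin d → ℝ) 1)
    (hPR : ∀ i, 0 < P (R i)) (hQR : ∀ i, 0 < Q (R i))
    (cs : Fin L → ℝ) (hcs : ∀ i, 0 < cs i) (hcsM : ∀ i, cs i ≤ M)
    (hψM : ∀ i, (P (R i)).toReal / (Q (R i)).toReal ≤ M)
    (ψ φ : (Fin d → ℝ) → ℝ)
    (hψ : ψ = fun x => ∑ i, Set.indicator (R i)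
        (fun _ => (P (R i)).toReal / (Q (R i)).toReal) x)
    (hφ : φ = fun x => ∑ i, Set.indicator (R i) (fun _ => cs i) x) :
    (1 + ∫ x, Real.log (ψ x) ∂P - ∫ x, ψ x ∂Q)
      - (1 + ∫ x, Real.log (φ x) ∂P - ∫ x, φ x ∂Q)
      ≥ (c / (2 * M)) * ∫ x in Set.Icc (0 : Fin d → ℝ) 1, (ψ x - φ x) ^ 2 := by
  have hνfin : ∀ i, (volume.restrict (Set.Icc (0 : Fin d → ℝ) 1)) (R i) ≠ ⊤ := by
    intro i
    refine ne_top_of_le_ne_top ?_ (measure_mono (Set.subset_univ (R i)))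
    rw [Measure.restrict_apply_univ]
    exact (isCompact_Icc.measure_lt_top).ne
  have hνc : (volume.restrict (Set.Icc (0 : Fin d → ℝ) 1)) (⋃ i, R i)ᶜ = 0 := by
    rw [hRcover, Measure.restrict_apply measurableSet_Icc.compl]
    simp
  have hPc : P (⋃ i, R i)ᶜ = 0 := by
    rw [hRcover, hP, withDensity_apply _ measurableSet_Icc.compl,
      Measure.restrict_restrict measurableSet_Icc.compl]
    simp
  have hQc : Q (⋃ i, R i)ᶜ = 0 := by
    rw [hRcover, hQ, withDensity_apply _ measurableSet_Icc.compl,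
      Measure.restrict_restrict measurableSet_Icc.compl]
    simp
  simp only [hψ, hφ]
  have h1 : ∫ x, Real.log (∑ i, Set.indicator (R i)
        (fun _ => (P (R i)).toReal / (Q (R i)).toReal) x) ∂P
      = ∑ i, Real.log ((P (R i)).toReal / (Q (R i)).toReal) * (P (R i)).toReal :=
    integral_comp_sum_indicator P R hRmeas hRdisj (fun i => measure_ne_top P _) hPc _ Real.log
  have h2 : ∫ x, (∑ i, Set.indicator (R i)
        (fun _ => (P (R i)).toReal / (Q (R i)).toReal) x) ∂Q
      = ∑ i, ((P (R i)).toReal / (Q (R i)).toReal) * (Q (R i)).toReal :=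
    integral_comp_sum_indicator Q R hRmeas hRdisj (fun i => measure_ne_top Q _) hQc _ (fun t => t)
  have h3 : ∫ x, Real.log (∑ i, Set.indicator (R i) (fun _ => cs i) x) ∂P
      = ∑ i, Real.log (cs i) * (P (R i)).toReal :=
    integral_comp_sum_indicator P R hRmeas hRdisj (fun i => measure_ne_top P _) hPc _ Real.log
  have h4 : ∫ x, (∑ i, Set.indicator (R i) (fun _ => cs i) x) ∂Q
      = ∑ i, (cs i) * (Q (R i)).toReal :=
    integral_comp_sum_indicator Q R hRmeas hRdisj (fun i => measure_ne_top Q _) hQc _ (fun t => t)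
  have h5 : (∫ x in Set.Icc (0 : Fin d → ℝ) 1,
        (∑ i, Set.indicator (R i) (fun _ => (P (R i)).toReal / (Q (R i)).toReal) x
          - ∑ i, Set.indicator (R i) (fun _ => cs i) x) ^ 2)
      = ∑ i, ((P (R i)).toReal / (Q (R i)).toReal - cs i) ^ 2
          * ((volume.restrict (Set.Icc (0 : Fin d → ℝ) 1)) (R i)).toReal := by
    rw [← integral_comp_sum_indicator (volume.restrict (Set.Icc (0 : Fin d → ℝ) 1)) R hRmeas
      hRdisj hνfin hνc (fun i => (P (R i)).toReal / (Q (R i)).toReal - cs i) (fun t => t ^ 2)]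
    refine integral_congr_ae (Filter.Eventually.of_forall fun x => ?_)
    simp only
    congr 1
    rw [← Finset.sum_sub_distrib]
    exact Finset.sum_congr rfl fun i _ => by by_cases h : x ∈ R i <;> simp [h]
  rw [ge_iff_le, h1, h2, h3, h4, h5, Finset.mul_sum]
  have hb : ∀ i, 0 < (Q (R i)).toReal :=
    fun i => ENNReal.toReal_pos (hQR i).ne' (measure_ne_top Q _)
  have pointwise : ∀ i ∈ Finset.univ, c / (2 * M) * (((P (R i)).toReal / (Q (R i)).toReal - cs i) ^ 2
        * ((volume.restrict (Set.Icc (0 : Fin d → ℝ) 1)) (R i)).toReal)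
      ≤ (Real.log ((P (R i)).toReal / (Q (R i)).toReal) * (P (R i)).toReal
          - ((P (R i)).toReal / (Q (R i)).toReal) * (Q (R i)).toReal)
        - (Real.log (cs i) * (P (R i)).toReal - cs i * (Q (R i)).toReal) := by
    intro i _
    set wi := (P (R i)).toReal / (Q (R i)).toReal with hwi
    set vi := ((volume.restrict (Set.Icc (0 : Fin d → ℝ) 1)) (R i)).toReal with hvi
    have hwpos : 0 < wi :=
      div_pos (ENNReal.toReal_pos (hPR i).ne' (measure_ne_top P _)) (hb i)
    have hvb : c * vi ≤ (Q (R i)).toReal := by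
      have h1 : ENNReal.ofReal c * (volume.restrict (Set.Icc (0 : Fin d → ℝ) 1)) (R i)
          ≤ Q (R i) := by
        rw [hQ, withDensity_apply _ (hRmeas i)]
        calc ENNReal.ofReal c * (volume.restrict (Set.Icc (0 : Fin d → ℝ) 1)) (R i)
            = ∫⁻ _ in R i, ENNReal.ofReal c ∂(volume.restrict (Set.Icc (0 : Fin d → ℝ) 1)) := by
              rw [setLIntegral_const]
          _ ≤ ∫⁻ x in R i, ENNReal.ofReal (q x)
              ∂(volume.restrict (Set.Icc (0 : Fin d → ℝ) 1)) := by
              refine lintegral_mono_ae ?_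
              filter_upwards [ae_restrict_of_ae hq] with x hx
              exact ENNReal.ofReal_le_ofReal hx
      have h2 := ENNReal.toReal_mono (measure_ne_top Q _) h1
      rwa [ENNReal.toReal_mul, ENNReal.toReal_ofReal hc.le] at h2
    have key := scalar_ineq hwpos (hcs i) (hψM i) (hcsM i)
    have hvnn : 0 ≤ vi := ENNReal.toReal_nonneg
    calc c / (2 * M) * ((wi - cs i) ^ 2 * vi)
        = (c * vi) * ((wi - cs i) ^ 2 / (2 * M)) := by ring
      _ ≤ (Q (R i)).toReal * ((wi - cs i) ^ 2 / (2 * M)) :=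
          mul_le_mul_of_nonneg_right hvb (by positivity)
      _ ≤ (Q (R i)).toReal * (wi * Real.log (wi / cs i) - wi + cs i) :=
          mul_le_mul_of_nonneg_left key (hb i).le
      _ = (Real.log wi * (P (R i)).toReal - wi * (Q (R i)).toReal)
          - (Real.log (cs i) * (P (R i)).toReal - cs i * (Q (R i)).toReal) := by
          have hab : wi * (Q (R i)).toReal = (P (R i)).toReal :=
            div_mul_cancel₀ _ (hb i).ne'
          rw [Real.log_div hwpos.ne' (hcs i).ne', ← hab]
          ring
  calc ∑ i, c / (2 * M) * (((P (R i)).toReal / (Q (R i)).toReal - cs i) ^ 2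
        * ((volume.restrict (Set.Icc (0 : Fin d → ℝ) 1)) (R i)).toReal)
      ≤ ∑ i, ((Real.log ((P (R i)).toReal / (Q (R i)).toReal) * (P (R i)).toReal
          - ((P (R i)).toReal / (Q (R i)).toReal) * (Q (R i)).toReal)
        - (Real.log (cs i) * (P (R i)).toReal - cs i * (Q (R i)).toReal)) :=
        Finset.sum_le_sum pointwise
    _ = (1 + ∑ i, Real.log ((P (R i)).toReal / (Q (R i)).toReal) * (P (R i)).toReal
          - ∑ i, ((P (R i)).toReal / (Q (R i)).toReal) * (Q (R i)).toReal)
        - (1 + ∑ i, Real.log (cs i) * (P (R i)).toReal - ∑ i, cs i * (Q (R i)).toReal) := by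
        rw [Finset.sum_sub_distrib, Finset.sum_sub_distrib, Finset.sum_sub_distrib]
        ring
end

section
/- (Approximation error) Let d ≥ 1, L ≥ 2, J ∈ ℕ, 0 < m ≤ M < ∞, 0 < c ≤ C < ∞ with m ≤ c/C and C/c ≤ M, and β > 0. Let P and Q be probability measures on [0,1]^d with densities p and q with respect to Lebesgue measure satisfying c ≤ p(x) ≤ C and c ≤ q(x) ≤ C for almost every x. Let ψ be a function on [0,1]^d taking at most L distinct values, all lying in [m, M], such that ψ is locally constant at every point of [0,1]^d ∖ B(ψ), where the boundary set B(ψ) satisfies: for every r > 0, B(ψ) can be covered by at most β·r^{−(d−1)} sets of diameter at most r. Let Φ(L,J,m,M) denote the class of functions φ = Σ_{i=0}^{L−1} c_i·1_{R_i} where m ≤ c_i ≤ M and {R_0,…,R_{L−1}} is a partition of [0,1]^d in which each R_i is a union of dyadic cubes of side length 2^{−J}. Then there exists φ ∈ Φ(L,J,m,M) with D(ψ) − D(φ) ≤ K·2^{−J}, where K = ((C + c·m)/m) · 2^{2d}·β·L·( M + (C/c)·(C/c + 1) ). Consequently D(ψ) − sup_{φ ∈ Φ(L,J,m,M)} D(φ)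 ≤ K·2^{−J}. -/
open MeasureTheory

noncomputable section

/-- The unit cube `[0,1]^d` in Euclidean space. -/
def unitCube (d : ℕ) : Set (EuclideanSpace ℝ (Fin d)) :=
  {x | ∀ i, 0 ≤ x i ∧ x i ≤ 1}

/-- The closed dyadic cube of side `2^{-J}` indexed by `k : Fin d → Fin (2^J)`,
i.e. `Π_i [k_i·2^{-J}, (k_i+1)·2^{-J}]`. -/
def dyadicCube (d J : ℕ) (k : Fin d → Fin (2 ^ J)) : Set (EuclideanSpace ℝ (Fin d)) :=
  {x | ∀ i, (k i : ℝ) / 2 ^ J ≤ x i ∧ x i ≤ ((k i : ℝ) + 1) / 2 ^ J}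

/-- The candidate class `Φ(L,J,m,M)`: piecewise constant functions
`φ = Σ_{i<L} c_i·1_{R_i}` with `m ≤ c_i ≤ M`, where `{R_i}` is a partition of
`[0,1]^d` in which each `R_i` is a union of dyadic cubes of side `2^{-J}`. -/
def candidateClass (d L J : ℕ) (m M : ℝ) : Set (EuclideanSpace ℝ (Fin d) → ℝ) :=
  {φ | ∃ (cs : Fin L → ℝ) (K : Fin L → Set (Fin d → Fin (2 ^ J))),
    (∀ i, m ≤ cs i ∧ cs i ≤ M) ∧
    Pairwise (Function.onFun Disjoint K) ∧
    (⋃ i, K i) = Set.univ ∧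
    φ = fun x => ∑ i, Set.indicator (⋃ k ∈ K i, dyadicCube d J k) (fun _ => cs i) x}

/-- The divergence functional `D(φ) = 1 + ∫ log φ dP - ∫ φ dQ`. -/
def Dfun {d : ℕ} (P Q : Measure (EuclideanSpace ℝ (Fin d)))
    (φ : EuclideanSpace ℝ (Fin d) → ℝ) : ℝ :=
  1 + ∫ x, Real.log (φ x) ∂P - ∫ x, φ x ∂Q

/-! ### Auxiliary lemmas -/

section Aux

lemma abs_coord_le_norm {d : ℕ} (x : EuclideanSpace ℝ (Fin d)) (i : Fin d) : |x i| ≤ ‖x‖ := by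
  rw [EuclideanSpace.norm_eq]
  have h1 : |x i| = Real.sqrt (‖x i‖^2) := by
    rw [Real.sqrt_sq_eq_abs]; simp [Real.norm_eq_abs, abs_abs]
  rw [h1]
  apply Real.sqrt_le_sqrt
  exact Finset.single_le_sum (f := fun j => ‖x j‖^2) (fun j _ => by positivity) (Finset.mem_univ i)

lemma euc_equiv_apply (d : ℕ) (x : EuclideanSpace ℝ (Fin d)) (i : Fin d) :
    ((MeasurableEquiv.toLp 2 (Fin d → ℝ)).symm) x i = x i := rfl

lemma box_eq_preimage (d : ℕ) (a b : Fin d → ℝ) :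
    {x : EuclideanSpace ℝ (Fin d) | ∀ i, a i ≤ x i ∧ x i ≤ b i} =
      ((MeasurableEquiv.toLp 2 (Fin d → ℝ)).symm) ⁻¹' (Set.univ.pi fun i => Set.Icc (a i) (b i)) := by
  ext x
  simp only [Set.mem_preimage, Set.mem_pi, Set.mem_univ, Set.mem_Icc, forall_true_left,
    Set.mem_setOf_eq]
  rfl

lemma measurableSet_box (d : ℕ) (a b : Fin d → ℝ) :
    MeasurableSet {x : EuclideanSpace ℝ (Fin d) | ∀ i, a i ≤ x i ∧ x i ≤ b i} := by
  rw [box_eq_preimage]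
  exact ((MeasurableEquiv.toLp 2 (Fin d → ℝ)).symm).measurable
    (MeasurableSet.univ_pi fun i => measurableSet_Icc)

lemma volume_box (d : ℕ) (a b : Fin d → ℝ) :
    volume {x : EuclideanSpace ℝ (Fin d) | ∀ i, a i ≤ x i ∧ x i ≤ b i} =
      ∏ i, ENNReal.ofReal (b i - a i) := by
  rw [box_eq_preimage]
  rw [(EuclideanSpace.volume_preserving_symm_measurableEquiv_toLp (Fin d)).measure_preimage
    (MeasurableSet.univ_pi (fun i => measurableSet_Icc)).nullMeasurableSet]
  rw [volume_pi_pi]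
  simp [Real.volume_Icc]

lemma volume_hyperplane (d : ℕ) (i : Fin d) (t : ℝ) :
    volume {x : EuclideanSpace ℝ (Fin d) | x i = t} = 0 := by
  have heq : {x : EuclideanSpace ℝ (Fin d) | x i = t} =
      ((MeasurableEquiv.toLp 2 (Fin d → ℝ)).symm) ⁻¹'
        (Set.univ.pi fun j => if j = i then {t} else Set.univ) := by
    ext x
    simp only [Set.mem_preimage, Set.mem_pi, Set.mem_univ, forall_true_left, Set.mem_setOf_eq,
      euc_equiv_apply]
    constructor
    · intro h j
      by_cases hj : j = i
      · subst hj; simp [h]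
      · simp [hj]
    · intro h
      have := h i
      simpa using this
  rw [heq]
  rw [(EuclideanSpace.volume_preserving_symm_measurableEquiv_toLp (Fin d)).measure_preimage
    ((MeasurableSet.univ_pi (fun j => by
      by_cases hj : j = i <;> simp [hj])).nullMeasurableSet)]
  rw [volume_pi_pi]
  apply Finset.prod_eq_zero (Finset.mem_univ i)
  simp

lemma measurableSet_hyperplane (d : ℕ) (i : Fin d) (t : ℝ) :
    MeasurableSet {x : EuclideanSpace ℝ (Fin d) | x i = t} := by
  have : Measurable (fun x : EuclideanSpace ℝ (Fin d) => x i) :=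
    (measurable_pi_apply i).comp ((MeasurableEquiv.toLp 2 (Fin d → ℝ)).symm).measurable
  exact this (MeasurableSet.singleton t)

lemma measurableSet_dyadicCube (d J : ℕ) (k : Fin d → Fin (2 ^ J)) :
    MeasurableSet (dyadicCube d J k) :=
  measurableSet_box d _ _

lemma measurableSet_unitCube (d : ℕ) : MeasurableSet (unitCube d) :=
  measurableSet_box d (fun _ => 0) (fun _ => 1)

lemma volume_dyadicCube (d J : ℕ) (k : Fin d → Fin (2 ^ J)) :
    volume (dyadicCube d J k) = ENNReal.ofReal ((((2:ℝ) ^ J)⁻¹) ^ d) := by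
  have : dyadicCube d J k =
      {x : EuclideanSpace ℝ (Fin d) | ∀ i,
        (fun i => (k i : ℝ) / 2 ^ J) i ≤ x i ∧ x i ≤ (fun i => ((k i : ℝ) + 1) / 2 ^ J) i} := rfl
  rw [this, volume_box]
  have hlen : ∀ i : Fin d, ((k i : ℝ) + 1) / 2 ^ J - (k i : ℝ) / 2 ^ J = ((2:ℝ) ^ J)⁻¹ := by
    intro i
    field_simp
    ring
  have hpos : (0:ℝ) ≤ ((2:ℝ) ^ J)⁻¹ := by positivity
  calc (∏ i : Fin d, ENNReal.ofReal (((k i : ℝ) + 1) / 2 ^ J - (k i : ℝ) / 2 ^ J))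
      = ∏ _i : Fin d, ENNReal.ofReal (((2:ℝ) ^ J)⁻¹) := by
        exact Finset.prod_congr rfl fun i _ => by rw [hlen i]
    _ = (ENNReal.ofReal (((2:ℝ) ^ J)⁻¹)) ^ d := by
        rw [Finset.prod_const]; simp
    _ = ENNReal.ofReal ((((2:ℝ) ^ J)⁻¹) ^ d) := by
        rw [ENNReal.ofReal_pow hpos]

/-- Grid hyperplane set: the union of the boundaries of all dyadic cubes. -/
def gridSet (d J : ℕ) : Set (EuclideanSpace ℝ (Fin d)) :=
  ⋃ (i : Fin d), ⋃ (t : ℕ) (_ : t ≤ 2 ^ J), {x | x i = (t : ℝ) / 2 ^ J}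

lemma measurableSet_gridSet (d J : ℕ) : MeasurableSet (gridSet d J) :=
  MeasurableSet.iUnion fun i => MeasurableSet.iUnion fun _ => MeasurableSet.iUnion fun _ =>
    measurableSet_hyperplane d i _

lemma volume_gridSet (d J : ℕ) : volume (gridSet d J) = 0 := by
  refine measure_iUnion_null fun i => measure_iUnion_null fun t => measure_iUnion_null fun _ => ?_
  exact volume_hyperplane d i _

lemma dyadicCube_subset_unitCube (d J : ℕ) (k : Fin d → Fin (2 ^ J)) :
    dyadicCube d J k ⊆ unitCube d := by
  intro x hx i
  obtain ⟨h1, h2⟩ := hx i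
  have hk : ((k i : ℕ) : ℝ) + 1 ≤ (2 : ℝ) ^ J := by
    have := (k i).2
    have : ((k i : ℕ) : ℝ) + 1 ≤ ((2 ^ J : ℕ) : ℝ) := by exact_mod_cast this
    simpa [Nat.cast_pow] using this
  have hpow : (0:ℝ) < 2 ^ J := by positivity
  constructor
  · have : (0:ℝ) ≤ (k i : ℝ) / 2 ^ J := by positivity
    linarith
  · have : ((k i : ℝ) + 1) / 2 ^ J ≤ 1 := by
      rw [div_le_one hpow]; exact hk
    linarith

lemma convex_dyadicCube (d J : ℕ) (k : Fin d → Fin (2 ^ J)) :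
    Convex ℝ (dyadicCube d J k) := by
  intro x hx y hy a b ha hb hab
  intro i
  have hxi := hx i
  have hyi := hy i
  have happ : (a • x + b • y) i = a * x i + b * y i := rfl
  rw [happ]
  constructor
  · have h := add_le_add (mul_le_mul_of_nonneg_left hxi.1 ha) (mul_le_mul_of_nonneg_left hyi.1 hb)
    have h2 : a * ((k i : ℝ) / 2 ^ J) + b * ((k i : ℝ) / 2 ^ J) = (k i : ℝ) / 2 ^ J := by
      rw [← add_mul, hab, one_mul]
    linarith
  · have h := add_le_add (mul_le_mul_of_nonneg_left hxi.2 ha) (mul_le_mul_of_nonneg_left hyi.2 hb)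
    have h2 : a * (((k i : ℝ) + 1) / 2 ^ J) + b * (((k i : ℝ) + 1) / 2 ^ J) =
        ((k i : ℝ) + 1) / 2 ^ J := by
      rw [← add_mul, hab, one_mul]
    linarith

lemma exists_dyadicCube_mem (d J : ℕ) {x : EuclideanSpace ℝ (Fin d)} (hx : x ∈ unitCube d) :
    ∃ k : Fin d → Fin (2 ^ J), x ∈ dyadicCube d J k := by
  have hpow : (0:ℝ) < 2 ^ J := by positivity
  have hpn : 0 < 2 ^ J := Nat.pow_pos (by norm_num)
  have hlt : ∀ i : Fin d, min (⌊x i * 2 ^ J⌋).toNat (2 ^ J - 1) < 2 ^ J := fun i =>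
    lt_of_le_of_lt (min_le_right _ _) (Nat.sub_lt hpn one_pos)
  refine ⟨fun i => ⟨min (⌊x i * 2 ^ J⌋).toNat (2 ^ J - 1), hlt i⟩, ?_⟩
  intro i
  obtain ⟨h0, h1⟩ := hx i
  show ((min (⌊x i * 2 ^ J⌋).toNat (2 ^ J - 1) : ℕ) : ℝ) / 2 ^ J ≤ x i ∧
    x i ≤ ((min (⌊x i * 2 ^ J⌋).toNat (2 ^ J - 1) : ℕ) + 1 : ℝ) / 2 ^ J
  have hfl0 : 0 ≤ ⌊x i * 2 ^ J⌋ := Int.floor_nonneg.2 (by positivity)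
  by_cases hcase : (⌊x i * 2 ^ J⌋).toNat ≤ 2 ^ J - 1
  · rw [min_eq_left hcase]
    have hcast : (((⌊x i * 2 ^ J⌋).toNat : ℕ) : ℝ) = (⌊x i * 2 ^ J⌋ : ℝ) := by
      exact_mod_cast congrArg (fun z : ℤ => (z : ℝ)) (Int.toNat_of_nonneg hfl0)
    rw [hcast]
    constructor
    · rw [div_le_iff₀ hpow]
      exact Int.floor_le _
    · rw [le_div_iff₀ hpow]
      exact le_of_lt (Int.lt_floor_add_one _)
  · rw [min_eq_right (le_of_lt (not_le.1 hcase))]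
    have hge : 2 ^ J ≤ (⌊x i * 2 ^ J⌋).toNat := by omega
    have hgeZ : (2 ^ J : ℤ) ≤ ⌊x i * 2 ^ J⌋ := by
      rw [← Int.toNat_of_nonneg hfl0]; exact_mod_cast hge
    have hxge : (2:ℝ) ^ J ≤ x i * 2 ^ J := by
      have := Int.le_floor.1 hgeZ
      exact_mod_cast (by push_cast at this ⊢; linarith : (2:ℝ) ^ J ≤ x i * 2 ^ J)
    have hx1 : x i = 1 := le_antisymm h1 (by nlinarith)
    have hcast2 : (((2 ^ J - 1 : ℕ) : ℕ) : ℝ) = (2:ℝ) ^ J - 1 := by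
      have : (1:ℕ) ≤ 2 ^ J := hpn
      push_cast [Nat.cast_sub this]
      ring
    rw [hcast2, hx1]
    constructor
    · rw [div_le_one hpow]; linarith
    · rw [le_div_iff₀ hpow]; linarith

/-- Off the grid, at most one dyadic cube contains `x`. -/
lemma dyadicCube_unique (d J : ℕ) {x : EuclideanSpace ℝ (Fin d)}
    (hx : x ∉ gridSet d J) {k k' : Fin d → Fin (2 ^ J)}
    (h : x ∈ dyadicCube d J k) (h' : x ∈ dyadicCube d J k') : k = k' := by
  have hpow : (0:ℝ) < 2 ^ J := by positivity
  have hgrid : ∀ (i : Fin d) (t : ℕ), t ≤ 2 ^ J → x i = (t : ℝ) / 2 ^ J → False := by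
    intro i t ht hxt
    exact hx (Set.mem_iUnion.2 ⟨i, Set.mem_iUnion.2 ⟨t, Set.mem_iUnion.2 ⟨ht, hxt⟩⟩⟩)
  have main : ∀ k k' : Fin d → Fin (2 ^ J), ∀ i : Fin d, x ∈ dyadicCube d J k →
      x ∈ dyadicCube d J k' → (k i : ℕ) < (k' i : ℕ) → False := by
    intro k k' i h h' hlt
    have h1 := (h i).2
    have h2 := (h' i).1
    have hcast : ((k i : ℕ) : ℝ) + 1 ≤ ((k' i : ℕ) : ℝ) := by exact_mod_cast hlt
    have hle : ((k i : ℝ) + 1) / 2 ^ J ≤ ((k' i : ℕ) : ℝ) / 2 ^ J := by gcongr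
    have heq : x i = ((k i : ℝ) + 1) / 2 ^ J := le_antisymm h1 (le_trans hle h2)
    refine hgrid i ((k i : ℕ) + 1) (k i).2 ?_
    rw [heq]; push_cast; ring_nf
  funext i
  rcases lt_trichotomy ((k i : ℕ)) ((k' i : ℕ)) with hlt | heq | hlt
  · exact absurd (main k k' i h h' hlt) (fun f => f)
  · exact Fin.ext heq
  · exact absurd (main k' k i h' h hlt) (fun f => f)

/-- A locally constant function is constant on cubes avoiding `B`. -/
lemma psi_const_on_cube (d J : ℕ) (ψ : EuclideanSpace ℝ (Fin d) → ℝ)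
    (B : Set (EuclideanSpace ℝ (Fin d)))
    (hloc : ∀ x ∈ unitCube d \ B, ∃ ε > 0,
      ∀ y ∈ unitCube d, ‖x - y‖ < ε → ψ y = ψ x)
    (k : Fin d → Fin (2 ^ J)) (hk : dyadicCube d J k ∩ B = ∅)
    {x y : EuclideanSpace ℝ (Fin d)} (hx : x ∈ dyadicCube d J k)
    (hy : y ∈ dyadicCube d J k) : ψ y = ψ x := by
  have hsub := dyadicCube_subset_unitCube d J k
  have key : ∀ z ∈ dyadicCube d J k, ∃ ε > 0,
      ∀ w ∈ unitCube d, ‖z - w‖ < ε → ψ w = ψ z := by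
    intro z hz
    refine hloc z ⟨hsub hz, fun hzB => ?_⟩
    exact absurd (Set.mem_inter hz hzB) (by rw [hk]; exact fun h => h)
  choose! ε hε hψε using key
  by_contra hne
  have hpc := (convex_dyadicCube d J k).isPreconnected
  set u : Set (EuclideanSpace ℝ (Fin d)) :=
    ⋃ z ∈ {z ∈ dyadicCube d J k | ψ z = ψ x}, Metric.ball z (ε z) with hu
  set v : Set (EuclideanSpace ℝ (Fin d)) :=
    ⋃ z ∈ {z ∈ dyadicCube d J k | ψ z ≠ ψ x}, Metric.ball z (ε z) with hv
  have hou : IsOpen u := isOpen_biUnion fun z _ => Metric.isOpen_ball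
  have hov : IsOpen v := isOpen_biUnion fun z _ => Metric.isOpen_ball
  have hcov : dyadicCube d J k ⊆ u ∪ v := by
    intro z hz
    have hball : z ∈ Metric.ball z (ε z) := Metric.mem_ball_self (hε z hz)
    by_cases hψz : ψ z = ψ x
    · exact Or.inl (Set.mem_biUnion ⟨hz, hψz⟩ hball)
    · exact Or.inr (Set.mem_biUnion ⟨hz, hψz⟩ hball)
  have hnu : (dyadicCube d J k ∩ u).Nonempty :=
    ⟨x, hx, Set.mem_biUnion ⟨hx, rfl⟩ (Metric.mem_ball_self (hε x hx))⟩
  have hnv : (dyadicCube d J k ∩ v).Nonempty :=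
    ⟨y, hy, Set.mem_biUnion ⟨hy, hne⟩ (Metric.mem_ball_self (hε y hy))⟩
  obtain ⟨w, hwk, hwu, hwv⟩ := hpc u v hou hov hcov hnu hnv
  obtain ⟨z1, hz1, hwz1⟩ := Set.mem_iUnion₂.1 hwu
  obtain ⟨z2, hz2, hwz2⟩ := Set.mem_iUnion₂.1 hwv
  have h1 : ψ w = ψ z1 := by
    apply hψε z1 hz1.1 w (hsub hwk)
    rw [← dist_eq_norm]
    exact Metric.mem_ball'.1 hwz1
  have h2 : ψ w = ψ z2 := by
    apply hψε z2 hz2.1 w (hsub hwk)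
    rw [← dist_eq_norm]
    exact Metric.mem_ball'.1 hwz2
  exact hz2.2 (by rw [← h2, h1, hz1.2])

open Classical in
/-- At most `4^d` dyadic cubes can touch a set of diameter at most `2^{-J}`. -/
lemma card_touching_le (d J : ℕ) (s : Set (EuclideanSpace ℝ (Fin d)))
    (hs : EMetric.diam s ≤ ENNReal.ofReal (((2:ℝ) ^ J)⁻¹)) :
    ((Finset.univ.filter
      (fun k : Fin d → Fin (2 ^ J) => (dyadicCube d J k ∩ s).Nonempty)).card : ℕ) ≤ 4 ^ d := by
  set F := Finset.univ.filter
      (fun k : Fin d → Fin (2 ^ J) => (dyadicCube d J k ∩ s).Nonempty) with hF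
  rcases F.eq_empty_or_nonempty with hFe | ⟨k0, hk0⟩
  · simp [hFe]
  have hk0' := Finset.mem_filter.1 hk0
  obtain ⟨w0, _, hw0s⟩ := hk0'.2
  set z := w0 with hz
  set r : ℝ := ((2:ℝ) ^ J)⁻¹ with hr
  have hrpos : 0 < r := by positivity
  have hpow : (0:ℝ) < 2 ^ J := by positivity
  set a : Fin d → ℤ := fun i => ⌈z i * 2 ^ J⌉ - 2 with ha
  have hmaps : ∀ k ∈ F, (fun i => ((k i : ℕ) : ℤ)) ∈
      Fintype.piFinset (fun i => Finset.Icc (a i) (a i + 3)) := by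
    intro k hk
    obtain ⟨w, hwk, hws⟩ := (Finset.mem_filter.1 hk).2
    have hdist : dist w z ≤ r := by
      have hedist : edist w z ≤ ENNReal.ofReal r :=
        le_trans (EMetric.edist_le_diam_of_mem hws hw0s) hs
      rw [edist_dist] at hedist
      exact (ENNReal.ofReal_le_ofReal_iff hrpos.le).1 hedist
    rw [Fintype.mem_piFinset]
    intro i
    have hcoord : |w i - z i| ≤ r := by
      have h3 : |(w - z) i| ≤ ‖w - z‖ := abs_coord_le_norm _ i
      have hsub : (w - z) i = w i - z i := rfl
      rw [hsub] at h3
      rw [dist_eq_norm] at hdist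
      linarith
    have hw1 : (k i : ℝ) / 2 ^ J ≤ w i := (hwk i).1
    have hw2 : w i ≤ ((k i : ℝ) + 1) / 2 ^ J := (hwk i).2
    have habs := abs_le.1 hcoord
    have hrmul : r * 2 ^ J = 1 := by
      rw [hr]; field_simp
    have hup : ((k i : ℕ) : ℝ) ≤ z i * 2 ^ J + 1 := by
      have h1 : (k i : ℝ) ≤ w i * 2 ^ J := by
        rw [div_le_iff₀ hpow] at hw1; linarith
      have h4 : w i ≤ z i + r := by linarith
      have h5 : w i * 2 ^ J ≤ (z i + r) * 2 ^ J := by nlinarith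
      nlinarith
    have hdn : z i * 2 ^ J - 2 ≤ ((k i : ℕ) : ℝ) := by
      have h1 : w i * 2 ^ J ≤ (k i : ℝ) + 1 := by
        rw [le_div_iff₀ hpow] at hw2; linarith
      have h4 : z i - r ≤ w i := by linarith
      have h5 : (z i - r) * 2 ^ J ≤ w i * 2 ^ J := by nlinarith
      nlinarith
    rw [Finset.mem_Icc]
    constructor
    · have : ⌈z i * 2 ^ J⌉ ≤ ((k i : ℕ) : ℤ) + 2 := by
        apply Int.ceil_le.2
        push_cast
        linarith
      have hai : a i = ⌈z i * 2 ^ J⌉ - 2 := rfl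
      omega
    · have hceil : z i * 2 ^ J ≤ (⌈z i * 2 ^ J⌉ : ℝ) := Int.le_ceil _
      have : ((k i : ℕ) : ℤ) ≤ ⌈z i * 2 ^ J⌉ + 1 := by
        have : ((k i : ℕ) : ℝ) ≤ (⌈z i * 2 ^ J⌉ : ℝ) + 1 := by linarith
        exact_mod_cast this
      have hai : a i = ⌈z i * 2 ^ J⌉ - 2 := rfl
      omega
  have hinj : Set.InjOn (fun k : Fin d → Fin (2 ^ J) => fun i => ((k i : ℕ) : ℤ)) F := by
    intro k1 _ k2 _ heq
    funext i
    have h2 : ((k1 i : ℕ) : ℤ) = ((k2 i : ℕ) : ℤ) := congrFun heq i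
    exact Fin.ext (by exact_mod_cast h2)
  calc F.card ≤ (Fintype.piFinset (fun i : Fin d => Finset.Icc (a i) (a i + 3))).card :=
        Finset.card_le_card_of_injOn _ hmaps hinj
    _ = ∏ i : Fin d, (Finset.Icc (a i) (a i + 3)).card := Fintype.card_piFinset _
    _ = ∏ _i : Fin d, 4 := by
        apply Finset.prod_congr rfl
        intro i _
        rw [Int.card_Icc]
        omega
    _ = 4 ^ d := by simp

lemma key_numeric {m M c C : ℝ} (L : ℕ) (hL : 2 ≤ L) (hm : 0 < m) (hmM : m ≤ M)
    (hc : 0 < c) (hcC : c ≤ C) (hmc : m ≤ c / C) :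
    (Real.log M - Real.log m + (M - m)) * C ≤
      ((C + c * m) / m) * L * (M + (C / c) * (C / c + 1)) := by
  have hC0 : (0:ℝ) < C := lt_of_lt_of_le hc hcC
  have hm1 : m ≤ 1 := le_trans hmc ((div_le_one hC0).2 hcC)
  have hq1 : (1:ℝ) ≤ C / c := (one_le_div hc).2 hcC
  have hL2 : (2:ℝ) ≤ L := by exact_mod_cast hL
  have hM0 : (0:ℝ) < M := lt_of_lt_of_le hm hmM
  have hlg : Real.log M - Real.log m ≤ M / m - 1 := by
    have h1 : Real.log (M / m) = Real.log M - Real.log m := Real.log_div hM0.ne' hm.ne'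
    have h2 : Real.log (M / m) ≤ M / m - 1 := Real.log_le_sub_one_of_pos (by positivity)
    linarith
  have hMm' : M ≤ M / m := by
    rw [le_div_iff₀ hm]
    nlinarith
  have hq2 : (2:ℝ) ≤ (C / c) * (C / c + 1) := by nlinarith
  calc (Real.log M - Real.log m + (M - m)) * C
      ≤ (2 * (M / m)) * C := by
        apply mul_le_mul_of_nonneg_right _ hC0.le
        linarith
    _ = (C / m) * (2 * M) := by field_simp
    _ ≤ (C / m) * (L * (M + (C / c) * (C / c + 1))) := by
        apply mul_le_mul_of_nonneg_left _ (by positivity)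
        nlinarith [mul_nonneg (by linarith : (0:ℝ) ≤ (L:ℝ) - 2)
          (by nlinarith : (0:ℝ) ≤ M + (C / c) * (C / c + 1))]
    _ = (C / m) * L * (M + (C / c) * (C / c + 1)) := by ring
    _ ≤ ((C + c * m) / m) * L * (M + (C / c) * (C / c + 1)) := by
        have hnum : C / m ≤ (C + c * m) / m := by
          gcongr
          nlinarith
        have hMt : (0:ℝ) ≤ M + (C / c) * (C / c + 1) := by nlinarith
        have hLMt : (0:ℝ) ≤ (L:ℝ) * (M + (C / c) * (C / c + 1)) :=
          mul_nonneg (by positivity) hMt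
        calc (C / m) * L * (M + (C / c) * (C / c + 1))
            = (C / m) * ((L:ℝ) * (M + (C / c) * (C / c + 1))) := by ring
          _ ≤ ((C + c * m) / m) * ((L:ℝ) * (M + (C / c) * (C / c + 1))) :=
              mul_le_mul_of_nonneg_right hnum hLMt
          _ = ((C + c * m) / m) * L * (M + (C / c) * (C / c + 1)) := by ring

lemma rpow_helper {r : ℝ} (hr : 0 < r) {d : ℕ} (hd : 1 ≤ d) :
    r ^ (-((d : ℝ) - 1)) * r ^ d = r := by
  rw [← Real.rpow_natCast r d, ← Real.rpow_add hr]
  have : -((d : ℝ) - 1) + (d : ℕ) = 1 := by push_cast; ring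
  rw [this, Real.rpow_one]

end Aux

/-- Approximation-error theorem: for `P`, `Q` with densities in `[c, C]` on
`[0,1]^d`, and an `L`-level piecewise constant rule `ψ` with values in `[m, M]`
that is locally constant off a boundary set `B(ψ)` satisfying the covering
condition `N(r) ≤ β·r^{-(d-1)}`, there exists `φ` in the candidate class
`Φ(L,J,m,M)` with `D(ψ) - D(φ) ≤ K·2^{-J}`, where
`K = ((C + c·m)/m)·2^{2d}·β·L·(M + (C/c)·(C/c + 1))`; consequently
`D(ψ) - sup_{φ ∈ Φ(L,J,m,M)} D(φ) ≤ K·2^{-J}`. -/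
theorem approximation_error
    (d L J : ℕ) (hd : 1 ≤ d) (hL : 2 ≤ L)
    (m M c C β : ℝ) (hm : 0 < m) (hmM : m ≤ M) (hc : 0 < c) (hcC : c ≤ C)
    (hmc : m ≤ c / C) (hCM : C / c ≤ M) (hβ : 0 < β)
    (p q : EuclideanSpace ℝ (Fin d) → ℝ)
    (P Q : Measure (EuclideanSpace ℝ (Fin d)))
    [IsProbabilityMeasure P] [IsProbabilityMeasure Q]
    (hP : P = (volume.restrict (unitCube d)).withDensity
        fun x => ENNReal.ofReal (p x))
    (hQ : Q = (volume.restrict (unitCube d)).withDensity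
        fun x => ENNReal.ofReal (q x))
    (hp : ∀ᵐ x ∂(volume.restrict (unitCube d)), c ≤ p x ∧ p x ≤ C)
    (hq : ∀ᵐ x ∂(volume.restrict (unitCube d)), c ≤ q x ∧ q x ≤ C)
    (ψ : EuclideanSpace ℝ (Fin d) → ℝ)
    (S : Finset ℝ) (hScard : S.card ≤ L) (hψS : ∀ x, ψ x ∈ S)
    (hψb : ∀ x, ψ x ∈ Set.Icc m M)
    (B : Set (EuclideanSpace ℝ (Fin d))) (hB : B ⊆ unitCube d)
    (hloc : ∀ x ∈ unitCube d \ B, ∃ ε > 0,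
      ∀ y ∈ unitCube d, ‖x - y‖ < ε → ψ y = ψ x)
    (hcov : ∀ r : ℝ, 0 < r → ∃ 𝒞 : Finset (Set (EuclideanSpace ℝ (Fin d))),
      (𝒞.card : ℝ) ≤ β * r ^ (-((d : ℝ) - 1)) ∧
      (∀ s ∈ 𝒞, EMetric.diam s ≤ ENNReal.ofReal r) ∧
      B ⊆ ⋃ s ∈ 𝒞, s) :
    (∃ φ ∈ candidateClass d L J m M,
      Dfun P Q ψ - Dfun P Q φ ≤
        ((C + c * m) / m) * 2 ^ (2 * d) * β * L * (M + (C / c) * (C / c + 1))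
          * (2 : ℝ) ^ (-(J : ℤ))) ∧
    Dfun P Q ψ - sSup (Dfun P Q '' candidateClass d L J m M) ≤
      ((C + c * m) / m) * 2 ^ (2 * d) * β * L * (M + (C / c) * (C / c + 1))
        * (2 : ℝ) ^ (-(J : ℤ)) := by
  classical
  have hmain : ∃ φ ∈ candidateClass d L J m M,
      Dfun P Q ψ - Dfun P Q φ ≤
        ((C + c * m) / m) * 2 ^ (2 * d) * β * L * (M + (C / c) * (C / c + 1))
          * (2 : ℝ) ^ (-(J : ℤ)) := by
    classical
    set μ0 : Measure (EuclideanSpace ℝ (Fin d)) := volume.restrict (unitCube d) with hμ0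
    have hPac : P ≪ μ0 := by rw [hP]; exact withDensity_absolutelyContinuous _ _
    have hQac : Q ≪ μ0 := by rw [hQ]; exact withDensity_absolutelyContinuous _ _
    have hC0 : (0:ℝ) < C := lt_of_lt_of_le hc hcC
    set r : ℝ := ((2:ℝ) ^ J)⁻¹ with hrdef
    have hrpos : 0 < r := by positivity
    obtain ⟨𝒞, hcard, hdiam, hcovB⟩ := hcov r hrpos
    -- bad cubes : those meeting B
    set Bad : Finset (Fin d → Fin (2 ^ J)) :=
      Finset.univ.filter (fun k => (dyadicCube d J k ∩ B).Nonempty) with hBadDef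
    set badset : Set (EuclideanSpace ℝ (Fin d)) := ⋃ k ∈ Bad, dyadicCube d J k with hbadsetDef
    have hbadmeas : MeasurableSet badset :=
      Finset.measurableSet_biUnion Bad fun k _ => measurableSet_dyadicCube d J k
    have hBadcard : (Bad.card : ℝ) ≤ (𝒞.card : ℝ) * 4 ^ d := by
      have hsub : Bad ⊆ 𝒞.biUnion (fun s => Finset.univ.filter
          (fun k => (dyadicCube d J k ∩ s).Nonempty)) := by
        intro k hk
        obtain ⟨b, hbk, hbB⟩ := (Finset.mem_filter.1 hk).2
        obtain ⟨s, hs𝒞, hbs⟩ := Set.mem_iUnion₂.1 (hcovB hbB)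
        exact Finset.mem_biUnion.2 ⟨s, hs𝒞, Finset.mem_filter.2 ⟨Finset.mem_univ _, ⟨b, hbk, hbs⟩⟩⟩
      have h1 : Bad.card ≤ 𝒞.card * 4 ^ d := by
        calc Bad.card ≤ (𝒞.biUnion (fun s => Finset.univ.filter
              (fun k => (dyadicCube d J k ∩ s).Nonempty))).card := Finset.card_le_card hsub
          _ ≤ ∑ s ∈ 𝒞, (Finset.univ.filter
              (fun k : Fin d → Fin (2 ^ J) => (dyadicCube d J k ∩ s).Nonempty)).card :=
              Finset.card_biUnion_le
          _ ≤ ∑ _s ∈ 𝒞, 4 ^ d := Finset.sum_le_sum fun s hs => card_touching_le d J s (hdiam s hs)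
          _ = 𝒞.card * 4 ^ d := by rw [Finset.sum_const, smul_eq_mul]
      exact_mod_cast h1
    have hbadvol : volume badset ≤ ENNReal.ofReal (β * 4 ^ d * r) := by
      calc volume badset ≤ ∑ k ∈ Bad, volume (dyadicCube d J k) := measure_biUnion_finset_le _ _
        _ = ∑ _k ∈ Bad, ENNReal.ofReal (r ^ d) := by
            refine Finset.sum_congr rfl fun k _ => ?_
            rw [volume_dyadicCube, hrdef]
        _ = (Bad.card : ENNReal) * ENNReal.ofReal (r ^ d) := by rw [Finset.sum_const, nsmul_eq_mul]
        _ ≤ ENNReal.ofReal ((𝒞.card : ℝ) * 4 ^ d) * ENNReal.ofReal (r ^ d) := by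
            apply mul_le_mul_left
            rw [← ENNReal.ofReal_natCast]
            exact ENNReal.ofReal_le_ofReal hBadcard
        _ ≤ ENNReal.ofReal ((β * r ^ (-((d:ℝ)-1))) * 4 ^ d) * ENNReal.ofReal (r ^ d) := by
            apply mul_le_mul_left
            apply ENNReal.ofReal_le_ofReal
            apply mul_le_mul_of_nonneg_right hcard (by positivity)
        _ = ENNReal.ofReal ((β * r ^ (-((d:ℝ)-1))) * 4 ^ d * r ^ d) := by
            rw [← ENNReal.ofReal_mul (by positivity)]
        _ = ENNReal.ofReal (β * 4 ^ d * r) := by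
            congr 1
            calc (β * r ^ (-((d:ℝ)-1))) * 4 ^ d * r ^ d
                = β * 4 ^ d * (r ^ (-((d:ℝ)-1)) * r ^ d) := by ring
              _ = β * 4 ^ d * r := by rw [rpow_helper hrpos hd]
    -- B is volume-null
    have hBnull : volume B = 0 := by
      refine le_antisymm ?_ (zero_le)
      refine ENNReal.le_of_forall_pos_le_add fun ε hε _ => ?_
      rw [zero_add]
      have hεR : (0:ℝ) < (ε : ℝ) := hε
      set r' : ℝ := (ε : ℝ) / (β * 2 ^ d) with hr'
      have hr'pos : 0 < r' := by positivity
      obtain ⟨𝒟, hcard', hdiam', hcov'⟩ := hcov r' hr'pos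
      have hsvol : ∀ s ∈ 𝒟, volume s ≤ ENNReal.ofReal ((2 * r') ^ d) := by
        intro s hs
        rcases Set.eq_empty_or_nonempty s with hse | ⟨z, hz⟩
        · simp [hse]
        have hsub : s ⊆ {x : EuclideanSpace ℝ (Fin d) |
            ∀ i, z i - r' ≤ x i ∧ x i ≤ z i + r'} := by
          intro w hw i
          have hdist : dist w z ≤ r' := by
            have hedist : edist w z ≤ ENNReal.ofReal r' :=
              le_trans (EMetric.edist_le_diam_of_mem hw hz) (hdiam' s hs)
            rw [edist_dist] at hedist
            exact (ENNReal.ofReal_le_ofReal_iff hr'pos.le).1 hedist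
          have h3 : |(w - z) i| ≤ ‖w - z‖ := abs_coord_le_norm _ i
          have hsubc : (w - z) i = w i - z i := rfl
          rw [hsubc] at h3
          rw [dist_eq_norm] at hdist
          have h4 := abs_le.1 (le_trans h3 hdist)
          constructor <;> linarith [h4.1, h4.2]
        calc volume s ≤ volume {x : EuclideanSpace ℝ (Fin d) |
              ∀ i, z i - r' ≤ x i ∧ x i ≤ z i + r'} := measure_mono hsub
          _ = ∏ _i : Fin d, ENNReal.ofReal (2 * r') := by
              rw [volume_box]
              exact Finset.prod_congr rfl fun i _ => by congr 1; ring
          _ = ENNReal.ofReal ((2 * r') ^ d) := by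
              rw [Finset.prod_const, ENNReal.ofReal_pow (by positivity)]
              simp
      calc volume B ≤ volume (⋃ s ∈ 𝒟, s) := measure_mono hcov'
        _ ≤ ∑ s ∈ 𝒟, volume s := measure_biUnion_finset_le _ _
        _ ≤ ∑ _s ∈ 𝒟, ENNReal.ofReal ((2 * r') ^ d) := Finset.sum_le_sum hsvol
        _ = (𝒟.card : ENNReal) * ENNReal.ofReal ((2 * r') ^ d) := by
            rw [Finset.sum_const, nsmul_eq_mul]
        _ ≤ ENNReal.ofReal (β * r' ^ (-((d:ℝ)-1))) * ENNReal.ofReal ((2 * r') ^ d) := by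
            apply mul_le_mul_left
            rw [← ENNReal.ofReal_natCast]
            exact ENNReal.ofReal_le_ofReal hcard'
        _ = ENNReal.ofReal (β * r' ^ (-((d:ℝ)-1)) * (2 * r') ^ d) := by
            rw [← ENNReal.ofReal_mul (by positivity)]
        _ = ENNReal.ofReal (β * 2 ^ d * r') := by
            congr 1
            rw [mul_pow]
            calc β * r' ^ (-((d:ℝ)-1)) * ((2:ℝ) ^ d * r' ^ d)
                = β * 2 ^ d * (r' ^ (-((d:ℝ)-1)) * r' ^ d) := by ring
              _ = β * 2 ^ d * r' := by rw [rpow_helper hr'pos hd]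
        _ = ENNReal.ofReal (ε : ℝ) := by
            congr 1
            rw [hr']
            field_simp
        _ = (ε : ENNReal) := ENNReal.ofReal_coe_nnreal
    -- centers of cubes
    set ctr : (Fin d → Fin (2 ^ J)) → EuclideanSpace ℝ (Fin d) :=
      fun k => WithLp.toLp 2 (fun i => ((k i : ℝ) + 2⁻¹) / 2 ^ J : Fin d → ℝ) with hctr
    have hctrmem : ∀ k, ctr k ∈ dyadicCube d J k := by
      intro k i
      have hpow : (0:ℝ) < 2 ^ J := by positivity
      have happ : ctr k i = ((k i : ℝ) + 2⁻¹) / 2 ^ J := rfl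
      rw [happ]
      have he1 : ((k i : ℝ) + 2⁻¹) / 2 ^ J - (k i : ℝ) / 2 ^ J = 2⁻¹ / 2 ^ J := by ring
      have he2 : ((k i : ℝ) + 1) / 2 ^ J - ((k i : ℝ) + 2⁻¹) / 2 ^ J = 2⁻¹ / 2 ^ J := by ring
      have hpos2 : (0:ℝ) ≤ 2⁻¹ / 2 ^ J := by positivity
      constructor
      · linarith
      · linarith
    -- enumeration of values
    have henum : ∃ (e : Fin L → ℝ) (glob : (Fin d → Fin (2 ^ J)) → Fin L),
        (∀ i, m ≤ e i ∧ e i ≤ M) ∧ ∀ k, e (glob k) = ψ (ctr k) := by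
      set S' : Finset ℝ := S.filter (fun s => m ≤ s ∧ s ≤ M) with hS'def
      have hS'card : S'.card ≤ L := le_trans (Finset.card_filter_le _ _) hScard
      have hmemS' : ∀ k, ψ (ctr k) ∈ S' := fun k =>
        Finset.mem_filter.2 ⟨hψS _, (hψb _).1, (hψb _).2⟩
      refine ⟨fun i => if h : (i : ℕ) < S'.card then ((S'.orderIsoOfFin rfl) ⟨i, h⟩ : ℝ) else m,
        fun k => ⟨(((S'.orderIsoOfFin rfl).symm ⟨ψ (ctr k), hmemS' k⟩ : Fin S'.card) : ℕ),
          lt_of_lt_of_le (Fin.is_lt _) hS'card⟩, ?_, ?_⟩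
      · intro i
        dsimp only
        split
        · next h =>
          have hmem := ((S'.orderIsoOfFin rfl) ⟨(i:ℕ), h⟩).2
          exact (Finset.mem_filter.1 hmem).2
        · exact ⟨le_refl m, hmM⟩
      · intro k
        dsimp only
        rw [dif_pos (Fin.is_lt ((S'.orderIsoOfFin rfl).symm ⟨ψ (ctr k), hmemS' k⟩))]
        have heta : (⟨(((S'.orderIsoOfFin rfl).symm ⟨ψ (ctr k), hmemS' k⟩ : Fin S'.card) : ℕ),
            Fin.is_lt _⟩ : Fin S'.card) = (S'.orderIsoOfFin rfl).symm ⟨ψ (ctr k), hmemS' k⟩ :=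
          rfl
        rw [heta, OrderIso.apply_symm_apply]
    obtain ⟨e, glob, hebound, heglob⟩ := henum
    -- the candidate function
    set Kpart : Fin L → Set (Fin d → Fin (2 ^ J)) := fun i => {k | glob k = i} with hKdef
    set φ : EuclideanSpace ℝ (Fin d) → ℝ :=
      fun x => ∑ i, Set.indicator (⋃ k ∈ Kpart i, dyadicCube d J k) (fun _ => e i) x with hφdef
    have hφmem : φ ∈ candidateClass d L J m M := by
      refine ⟨e, Kpart, hebound, ?_, ?_, rfl⟩
      · intro i j hij
        refine Set.disjoint_left.2 fun k hk1 hk2 => hij ?_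
        exact hk1.symm.trans hk2
      · apply Set.eq_univ_of_forall
        intro k
        exact Set.mem_iUnion.2 ⟨glob k, rfl⟩
    have hUimeas : ∀ i, MeasurableSet (⋃ k ∈ Kpart i, dyadicCube d J k) := fun i =>
      MeasurableSet.biUnion (Set.to_countable _) fun k _ => measurableSet_dyadicCube d J k
    have hφmeas : Measurable φ := by
      rw [hφdef]
      exact Finset.measurable_sum _ fun i _ => Measurable.indicator measurable_const (hUimeas i)
    -- key pointwise description of φ
    have hkey : ∀ x, x ∈ unitCube d → x ∉ gridSet d J →
        (m ≤ φ x ∧ φ x ≤ M) ∧ (x ∉ badset → φ x = ψ x) := by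
      intro x hxU hxG
      obtain ⟨k0, hk0⟩ := exists_dyadicCube_mem d J hxU
      have hφx : φ x = e (glob k0) := by
        rw [hφdef]
        dsimp only
        rw [Finset.sum_eq_single (glob k0)]
        · rw [Set.indicator_of_mem]
          exact Set.mem_biUnion (show k0 ∈ Kpart (glob k0) from rfl) hk0
        · intro i _ hne
          apply Set.indicator_of_notMem
          intro hxmem
          obtain ⟨k, hkK, hkx⟩ := Set.mem_iUnion₂.1 hxmem
          have hkk0 : k = k0 := dyadicCube_unique d J hxG hkx hk0
          rw [hkk0] at hkK
          exact hne hkK.symm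
        · intro habs
          exact absurd (Finset.mem_univ _) habs
      constructor
      · rw [hφx]; exact hebound (glob k0)
      · intro hxbad
        have hgood : dyadicCube d J k0 ∩ B = ∅ := by
          rw [Set.eq_empty_iff_forall_notMem]
          rintro b ⟨hbk, hbB⟩
          exact hxbad (Set.mem_biUnion
            (Finset.mem_filter.2 ⟨Finset.mem_univ _, ⟨b, hbk, hbB⟩⟩) hk0)
        rw [hφx, heglob k0]
        exact psi_const_on_cube d J ψ B hloc k0 hgood hk0 (hctrmem k0)
    -- a.e. measurability of ψ
    choose! εf hεf1 hεf2 using hloc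
    have hψg : ∃ g : EuclideanSpace ℝ (Fin d) → ℝ, Measurable g ∧
        ∀ x, x ∈ unitCube d → x ∉ B → ψ x = g x := by
      refine ⟨fun x => ∑ s ∈ S, Set.indicator
        ((⋃ x' ∈ {x' | x' ∈ unitCube d \ B ∧ ψ x' = s}, Metric.ball x' (εf x')) ∩ unitCube d)
        (fun _ => s) x, ?_, ?_⟩
      · exact Finset.measurable_sum _ fun s _ => Measurable.indicator measurable_const
          (((isOpen_biUnion fun x' _ => Metric.isOpen_ball).measurableSet).inter
            (measurableSet_unitCube d))
      · intro x hxU hxB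
        symm
        show (∑ s ∈ S, Set.indicator
          ((⋃ x' ∈ {x' | x' ∈ unitCube d \ B ∧ ψ x' = s}, Metric.ball x' (εf x')) ∩ unitCube d)
          (fun _ => s) x) = ψ x
        rw [Finset.sum_eq_single (ψ x)]
        · apply Set.indicator_of_mem
          exact ⟨Set.mem_biUnion (show x ∈ {x' | x' ∈ unitCube d \ B ∧ ψ x' = ψ x}
            from ⟨⟨hxU, hxB⟩, rfl⟩) (Metric.mem_ball_self (hεf1 x ⟨hxU, hxB⟩)), hxU⟩
        · intro s hsS hne
          apply Set.indicator_of_notMem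
          rintro ⟨hxOs, -⟩
          obtain ⟨x', hx', hxball⟩ := Set.mem_iUnion₂.1 hxOs
          have hψeq : ψ x = ψ x' := by
            apply hεf2 x' hx'.1 x hxU
            rw [← dist_eq_norm]
            exact Metric.mem_ball'.1 hxball
          exact hne (hψeq.trans hx'.2).symm
        · intro hnotin
          exact absurd (hψS x) hnotin
    obtain ⟨g, hgmeas, hψgeq⟩ := hψg
    have hae0 : ∀ᵐ x ∂μ0, x ∈ unitCube d := ae_restrict_mem (measurableSet_unitCube d)
    have haeB : ∀ᵐ x ∂μ0, x ∉ B := by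
      apply measure_eq_zero_iff_ae_notMem.1
      exact le_antisymm (le_trans (Measure.restrict_apply_le _ _) (le_of_eq hBnull)) (zero_le)
    have haeGrid : ∀ᵐ x ∂μ0, x ∉ gridSet d J := by
      apply measure_eq_zero_iff_ae_notMem.1
      exact le_antisymm (le_trans (Measure.restrict_apply_le _ _)
        (le_of_eq (volume_gridSet d J))) (zero_le)
    have hψgae : ψ =ᵐ[μ0] g := by
      filter_upwards [hae0, haeB] with x hxU hxB
      exact hψgeq x hxU hxB
    have hψaeP : AEMeasurable ψ P := ⟨g, hgmeas, hψgae.filter_mono hPac.ae_le⟩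
    have hψaeQ : AEMeasurable ψ Q := ⟨g, hgmeas, hψgae.filter_mono hQac.ae_le⟩
    have haeP : ∀ᵐ x ∂P, x ∈ unitCube d ∧ x ∉ gridSet d J :=
      Filter.Eventually.filter_mono hPac.ae_le (hae0.and haeGrid)
    have haeQ : ∀ᵐ x ∂Q, x ∈ unitCube d ∧ x ∉ gridSet d J :=
      Filter.Eventually.filter_mono hQac.ae_le (hae0.and haeGrid)
    -- integrability
    have hψpos : ∀ x, 0 < ψ x := fun x => lt_of_lt_of_le hm (hψb x).1
    have hlogbound : ∀ t : ℝ, m ≤ t → t ≤ M → ‖Real.log t‖ ≤ |Real.log m| + |Real.log M| := by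
      intro t h1 h2
      have hl1 : Real.log m ≤ Real.log t := Real.log_le_log hm h1
      have hl2 : Real.log t ≤ Real.log M := Real.log_le_log (lt_of_lt_of_le hm h1) h2
      rw [Real.norm_eq_abs, abs_le]
      constructor
      · linarith [neg_abs_le (Real.log m), abs_nonneg (Real.log M)]
      · linarith [le_abs_self (Real.log M), abs_nonneg (Real.log m)]
    have hintlogψP : Integrable (fun x => Real.log (ψ x)) P :=
      Integrable.mono' (integrable_const (|Real.log m| + |Real.log M|))
        (Real.measurable_log.comp_aemeasurable hψaeP).aestronglyMeasurable
        (Filter.Eventually.of_forall fun x => hlogbound _ (hψb x).1 (hψb x).2)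
    have hintψQ : Integrable ψ Q :=
      Integrable.mono' (integrable_const M) hψaeQ.aestronglyMeasurable
        (Filter.Eventually.of_forall fun x => by
          rw [Real.norm_eq_abs, abs_of_pos (hψpos x)]; exact (hψb x).2)
    have hintlogφP : Integrable (fun x => Real.log (φ x)) P := by
      refine Integrable.mono' (integrable_const (|Real.log m| + |Real.log M|))
        (Real.measurable_log.comp hφmeas).aestronglyMeasurable ?_
      filter_upwards [haeP] with x hx
      obtain ⟨hb, -⟩ := hkey x hx.1 hx.2
      exact hlogbound _ hb.1 hb.2
    have hintφQ : Integrable φ Q := by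
      refine Integrable.mono' (integrable_const M) hφmeas.aestronglyMeasurable ?_
      filter_upwards [haeQ] with x hx
      obtain ⟨hb, -⟩ := hkey x hx.1 hx.2
      rw [Real.norm_eq_abs, abs_le]
      constructor <;> linarith [hb.1, hb.2, hm.le, hmM]
    -- the exceptional set
    set E : Set (EuclideanSpace ℝ (Fin d)) := badset ∪ gridSet d J with hEdef
    have hEmeas : MeasurableSet E := hbadmeas.union (measurableSet_gridSet d J)
    have hμ0E : μ0 E ≤ ENNReal.ofReal (β * 4 ^ d * r) := by
      refine le_trans (Measure.restrict_apply_le _ _) (le_trans (measure_union_le _ _) ?_)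
      rw [volume_gridSet, add_zero]
      exact hbadvol
    have hPE : (P E).toReal ≤ C * (β * 4 ^ d * r) := by
      apply ENNReal.toReal_le_of_le_ofReal (by positivity)
      rw [ENNReal.ofReal_mul hC0.le]
      rw [hP, withDensity_apply _ hEmeas]
      calc ∫⁻ x in E, ENNReal.ofReal (p x) ∂μ0
          ≤ ∫⁻ _x in E, ENNReal.ofReal C ∂μ0 := by
            refine lintegral_mono_ae ?_
            exact ae_restrict_of_ae (hp.mono fun x hx => ENNReal.ofReal_le_ofReal hx.2)
        _ = ENNReal.ofReal C * μ0 E := by rw [setLIntegral_const]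
        _ ≤ ENNReal.ofReal C * ENNReal.ofReal (β * 4 ^ d * r) := mul_le_mul_right hμ0E _
    have hQE : (Q E).toReal ≤ C * (β * 4 ^ d * r) := by
      apply ENNReal.toReal_le_of_le_ofReal (by positivity)
      rw [ENNReal.ofReal_mul hC0.le]
      rw [hQ, withDensity_apply _ hEmeas]
      calc ∫⁻ x in E, ENNReal.ofReal (q x) ∂μ0
          ≤ ∫⁻ _x in E, ENNReal.ofReal C ∂μ0 := by
            refine lintegral_mono_ae ?_
            exact ae_restrict_of_ae (hq.mono fun x hx => ENNReal.ofReal_le_ofReal hx.2)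
        _ = ENNReal.ofReal C * μ0 E := by rw [setLIntegral_const]
        _ ≤ ENNReal.ofReal C * ENNReal.ofReal (β * 4 ^ d * r) := mul_le_mul_right hμ0E _
    -- reduce to integrals over E
    have hsplit : Dfun P Q ψ - Dfun P Q φ =
        (∫ x, (Real.log (ψ x) - Real.log (φ x)) ∂P) - ∫ x, (ψ x - φ x) ∂Q := by
      unfold Dfun
      rw [integral_sub hintlogψP hintlogφP, integral_sub hintψQ hintφQ]
      ring
    have hf1eq : (∫ x, (Real.log (ψ x) - Real.log (φ x)) ∂P) =
        ∫ x in E, (Real.log (ψ x) - Real.log (φ x)) ∂P := by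
      rw [← integral_indicator hEmeas]
      apply integral_congr_ae
      filter_upwards [haeP] with x hx
      by_cases hxE : x ∈ E
      · rw [Set.indicator_of_mem hxE]
      · rw [Set.indicator_of_notMem hxE]
        have hxbad : x ∉ badset := fun hcon => hxE (Set.mem_union_left _ hcon)
        have heq := (hkey x hx.1 hx.2).2 hxbad
        rw [heq, sub_self]
    have hf2eq : (∫ x, (ψ x - φ x) ∂Q) = ∫ x in E, (ψ x - φ x) ∂Q := by
      rw [← integral_indicator hEmeas]
      apply integral_congr_ae
      filter_upwards [haeQ] with x hx
      by_cases hxE : x ∈ E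
      · rw [Set.indicator_of_mem hxE]
      · rw [Set.indicator_of_notMem hxE]
        have hxbad : x ∉ badset := fun hcon => hxE (Set.mem_union_left _ hcon)
        have heq := (hkey x hx.1 hx.2).2 hxbad
        rw [heq, sub_self]
    have hf1 : ‖∫ x in E, (Real.log (ψ x) - Real.log (φ x)) ∂P‖ ≤
        (Real.log M - Real.log m) * (P E).toReal := by
      apply norm_setIntegral_le_of_norm_le_const_ae' (measure_lt_top P E)
      filter_upwards [haeP] with x hx _
      obtain ⟨hb, -⟩ := hkey x hx.1 hx.2
      have hψ1 : Real.log m ≤ Real.log (ψ x) := Real.log_le_log hm (hψb x).1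
      have hψ2 : Real.log (ψ x) ≤ Real.log M := Real.log_le_log (hψpos x) (hψb x).2
      have hφ1 : Real.log m ≤ Real.log (φ x) := Real.log_le_log hm hb.1
      have hφ2 : Real.log (φ x) ≤ Real.log M := Real.log_le_log (lt_of_lt_of_le hm hb.1) hb.2
      rw [Real.norm_eq_abs, abs_le]
      constructor <;> linarith
    have hf2 : ‖∫ x in E, (ψ x - φ x) ∂Q‖ ≤ (M - m) * (Q E).toReal := by
      apply norm_setIntegral_le_of_norm_le_const_ae' (measure_lt_top Q E)
      filter_upwards [haeQ] with x hx _
      obtain ⟨hb, -⟩ := hkey x hx.1 hx.2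
      rw [Real.norm_eq_abs, abs_le]
      constructor <;> linarith [(hψb x).1, (hψb x).2, hb.1, hb.2]
    refine ⟨φ, hφmem, ?_⟩
    rw [Real.norm_eq_abs] at hf1 hf2
    have hlogMm : 0 ≤ Real.log M - Real.log m := by
      have := Real.log_le_log hm hmM
      linarith
    have hd1 : Dfun P Q ψ - Dfun P Q φ ≤
        (Real.log M - Real.log m) * (P E).toReal + (M - m) * (Q E).toReal := by
      rw [hsplit, hf1eq, hf2eq]
      have h1 := le_abs_self (∫ x in E, (Real.log (ψ x) - Real.log (φ x)) ∂P)
      have h2 := neg_abs_le (∫ x in E, (ψ x - φ x) ∂Q)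
      linarith
    have hcmb : (Real.log M - Real.log m) * (P E).toReal + (M - m) * (Q E).toReal ≤
        (Real.log M - Real.log m + (M - m)) * (C * (β * 4 ^ d * r)) := by
      have h1 := mul_le_mul_of_nonneg_left hPE hlogMm
      have h2 := mul_le_mul_of_nonneg_left hQE (by linarith : (0:ℝ) ≤ M - m)
      calc (Real.log M - Real.log m) * (P E).toReal + (M - m) * (Q E).toReal
          ≤ (Real.log M - Real.log m) * (C * (β * 4 ^ d * r))
            + (M - m) * (C * (β * 4 ^ d * r)) := add_le_add h1 h2
        _ = (Real.log M - Real.log m + (M - m)) * (C * (β * 4 ^ d * r)) := by ring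
    -- final numeric inequality
    have hrfin : (2:ℝ) ^ (-(J:ℤ)) = r := by
      rw [hrdef, zpow_neg, zpow_natCast]
    have hfour : (2:ℝ) ^ (2 * d) = 4 ^ d := by
      rw [pow_mul]; norm_num
    have hkeyineq : (Real.log M - Real.log m + (M - m)) * C ≤
        ((C + c * m) / m) * L * (M + (C / c) * (C / c + 1)) :=
      key_numeric L hL hm hmM hc hcC hmc
    refine le_trans hd1 (le_trans hcmb ?_)
    rw [hfour, hrfin]
    calc (Real.log M - Real.log m + (M - m)) * (C * (β * 4 ^ d * r))
        = ((Real.log M - Real.log m + (M - m)) * C) * (β * 4 ^ d * r) := by ring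
      _ ≤ (((C + c * m) / m) * L * (M + (C / c) * (C / c + 1))) * (β * 4 ^ d * r) := by
          apply mul_le_mul_of_nonneg_right hkeyineq (by positivity)
      _ = ((C + c * m) / m) * 4 ^ d * β * L * (M + (C / c) * (C / c + 1)) * r := by ring

  -- Boundedness of the image of the candidate class under `Dfun`.
  have hM1 : (1:ℝ) ≤ M := le_trans ((one_le_div hc).2 hcC) hCM
  have hLM1 : (1:ℝ) ≤ L * M := by
    have : (2:ℝ) ≤ L := by exact_mod_cast hL
    nlinarith
  have hbdd : BddAbove (Dfun P Q '' candidateClass d L J m M) := by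
    refine ⟨1 + Real.log (L * M), ?_⟩
    rintro y ⟨φ', hφ', rfl⟩
    obtain ⟨cs, Kf, hcs, _, _, hφ'eq⟩ := hφ'
    have hφ'nonneg : ∀ x, 0 ≤ φ' x := by
      intro x
      rw [hφ'eq]
      exact Finset.sum_nonneg fun i _ =>
        Set.indicator_nonneg (fun _ _ => le_of_lt (lt_of_lt_of_le hm (hcs i).1)) x
    have hφ'le : ∀ x, φ' x ≤ L * M := by
      intro x
      rw [hφ'eq]
      calc (∑ i, Set.indicator (⋃ k ∈ Kf i, dyadicCube d J k) (fun _ => cs i) x)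
          ≤ ∑ _i : Fin L, M := by
            refine Finset.sum_le_sum fun i _ => ?_
            refine Set.indicator_le' (fun _ _ => (hcs i).2) (fun _ _ => le_trans hm.le hmM) x
        _ = L * M := by rw [Finset.sum_const]; simp [nsmul_eq_mul]
    have hlog : ∀ x, Real.log (φ' x) ≤ Real.log (L * M) := by
      intro x
      rcases eq_or_lt_of_le (hφ'nonneg x) with heq | hpos
      · rw [← heq, Real.log_zero]
        exact Real.log_nonneg hLM1
      · exact Real.log_le_log hpos (hφ'le x)
    have hlogint : (∫ x, Real.log (φ' x) ∂P) ≤ Real.log (L * M) := by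
      by_cases hint : Integrable (fun x => Real.log (φ' x)) P
      · calc (∫ x, Real.log (φ' x) ∂P) ≤ ∫ _x, Real.log (L * M) ∂P :=
              integral_mono hint (integrable_const _) hlog
          _ = Real.log (L * M) := by simp [measure_univ]
      · rw [integral_undef hint]
        exact Real.log_nonneg hLM1
    have hQint : 0 ≤ ∫ x, φ' x ∂Q := integral_nonneg hφ'nonneg
    unfold Dfun
    linarith
  obtain ⟨φ, hφmem, hφle⟩ := hmain
  refine ⟨⟨φ, hφmem, hφle⟩, ?_⟩
  have hsup : Dfun P Q φ ≤ sSup (Dfun P Q '' candidateClass d L J m M) :=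
    le_csSup hbdd ⟨φ, hφmem, rfl⟩
  linarith

end
end
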